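/- Let \(H = H_1 + H_2\) be a sum of two Hermitian matrices and let \(T_1(x) = e^{-iH_1 x}e^{-iH_2 x}\) be the first-order Trotter formula. Then for \(x \ge 0\), \(\|e^{-iHx} - T_1(x)\|_\infty \le \frac{x^2}{2}\,\|[H_1,H_2]\|_\infty\). -/

import Mathlib

open Matrix Complex
open scoped Kronecker ComplexOrder

/-- Schatten 1-norm (trace norm) of a complex square matrix. -/
noncomputable def traceNorm {n : Type*} [Fintype n] [DecidableEq n] (A : Matrix n n ℂ) : ℝ :=
  ((Matrix.posSemidef_conjTranspose_mul_self A).1.eigenvectorUnitary.1 *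
    Matrix.diagonal (((↑) : ℝ → ℂ) ∘ (√·) ∘ (Matrix.posSemidef_conjTranspose_mul_self A).1.eigenvalues) *
    (star (Matrix.posSemidef_conjTranspose_mul_self A).1.eigenvectorUnitary : Matrix n n ℂ)).trace.re

/-- Operator (spectral) norm of a complex square matrix. -/
noncomputable def opNorm {n : Type*} [Fintype n] [DecidableEq n] (A : Matrix n n ℂ) : ℝ :=
  ‖Matrix.toEuclideanCLM (𝕜 := ℂ) A‖

/-- Induced 1→1 norm of a superoperator (map on matrices). -/
noncomputable def indNorm {n : Type*} [Fintype n] [DecidableEq n]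
    (f : Matrix n n ℂ → Matrix n n ℂ) : ℝ :=
  sSup {y | ∃ X : Matrix n n ℂ, traceNorm X ≤ 1 ∧ y = traceNorm (f X)}

/-- Partial trace over the environment (second) tensor factor. -/
noncomputable def ptraceE {s e : Type*} [Fintype e]
    (A : Matrix (s × e) (s × e) ℂ) : Matrix s s ℂ :=
  Matrix.of fun i j => ∑ k, A (i, k) (j, k)

/-- A density matrix: positive semidefinite with unit trace. -/
def IsDensity {n : Type*} [Fintype n] [DecidableEq n] (ρ : Matrix n n ℂ) : Prop :=
  ρ.PosSemidef ∧ ρ.trace = 1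

/-- Commutator of matrices. -/
noncomputable def mcomm {n : Type*} [Fintype n] (A X : Matrix n n ℂ) : Matrix n n ℂ := A * X - X * A

set_option linter.unusedSectionVars false

section TrotterAux

open NormedSpace

variable {E : Type*} [NormedRing E] [StarRing E] [CStarRing E] [NormedAlgebra ℂ E]
  [CompleteSpace E] [StarModule ℂ E]

noncomputable def Uexp (M : E) (s : ℝ) : E := NormedSpace.exp ((s : ℂ) • M)

lemma Uexp_eq_real (M : E) (s : ℝ) : Uexp M s = NormedSpace.exp (s • M) := by
  rw [Uexp]
  congr 1

lemma hasDerivAt_Uexp (M : E) (t : ℝ) :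
    HasDerivAt (fun s : ℝ => Uexp M s) (Uexp M t * M) t := by
  simp only [Uexp_eq_real]
  exact hasDerivAt_exp_smul_const (𝕂 := ℝ) M t

lemma Uexp_zero (M : E) : Uexp M 0 = 1 := by
  simp [Uexp, NormedSpace.exp_zero]

lemma Uexp_commute (M : E) (s : ℝ) : Uexp M s * M = M * Uexp M s :=
  (((Commute.refl M).smul_right ((s : ℂ))).exp_right).symm.eq

lemma Uexp_mul_neg (M : E) (t : ℝ) : Uexp M t * Uexp M (-t) = 1 := by
  have hc : Commute ((t : ℂ) • M) (((-t : ℝ) : ℂ) • M) :=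
    ((Commute.refl M).smul_left _).smul_right _
  let +nondep : NormedAlgebra ℚ E := .restrictScalars ℚ ℂ E
  rw [Uexp, Uexp, ← NormedSpace.exp_add_of_commute hc]
  have h0 : (t : ℂ) • M + ((-t : ℝ) : ℂ) • M = 0 := by
    rw [← add_smul]
    push_cast
    simp
  rw [h0, NormedSpace.exp_zero]

lemma norm_Uexp [Nontrivial E] {h : E} (hh : IsSelfAdjoint h) (s : ℝ) :
    ‖Uexp ((-I) • h) s‖ = 1 := by
  have hscal : star ((s : ℂ) * -I) = -((s : ℂ) * -I) := by
    simp [Complex.ext_iff]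
  have hmem : (s : ℂ) • ((-I) • h) ∈ skewAdjoint E := by
    rw [skewAdjoint.mem_iff, smul_smul, star_smul, hh.star_eq, hscal, neg_smul]
  let +nondep : NormedAlgebra ℚ E := .restrictScalars ℚ ℂ E
  exact CStarRing.norm_of_mem_unitary (NormedSpace.exp_mem_unitary_of_mem_skewAdjoint hmem)

lemma comm_Uexp_bound [Nontrivial E] {a : E} (ha : IsSelfAdjoint a) (b : E) (t : ℝ) (ht : 0 ≤ t) :
    ‖b * Uexp ((-I) • a) t - Uexp ((-I) • a) t * b‖ ≤ t * ‖a * b - b * a‖ := by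
  set M : E := (-I) • a with hM
  set c : E := a * b - b * a with hc
  set g : ℝ → E := fun s => Uexp M (-s) * b * Uexp M s - b with hgdef
  set g' : ℝ → E := fun s => Uexp M (-s) * (b * M - M * b) * Uexp M s with hg'def
  have hderiv : ∀ s : ℝ, HasDerivAt g (g' s) s := by
    intro s
    have h1 : HasDerivAt (fun s : ℝ => Uexp M (-s)) ((-1 : ℝ) • (Uexp M (-s) * M)) s :=
      HasDerivAt.scomp s (hasDerivAt_Uexp M (-s)) (hasDerivAt_neg s)
    have h2 := hasDerivAt_Uexp M s
    have h3 := ((h1.mul_const b).mul h2).sub_const b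
    refine h3.congr_deriv (Eq.symm ?_)
    have hcomm := Uexp_commute M s
    simp only [neg_one_smul]
    rw [hg'def]
    simp only
    rw [show Uexp M (-s) * b * (Uexp M s * M) = Uexp M (-s) * b * (M * Uexp M s) by
      rw [← hcomm]]
    noncomm_ring
  have hnorm : ∀ s : ℝ, ‖g' s‖ ≤ ‖c‖ := by
    intro s
    have h1 : b * M - M * b = (-I) • (b * a - a * b) := by
      rw [hM, smul_sub, mul_smul_comm, smul_mul_assoc]
    have h2 : ‖b * M - M * b‖ = ‖c‖ := by
      rw [h1, norm_smul]
      simp only [norm_neg, Complex.norm_I, one_mul]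
      rw [show b * a - a * b = -c from (neg_sub _ _).symm, norm_neg]
    calc ‖g' s‖ ≤ ‖Uexp M (-s) * (b * M - M * b)‖ * ‖Uexp M s‖ := norm_mul_le _ _
      _ ≤ ‖Uexp M (-s)‖ * ‖b * M - M * b‖ * ‖Uexp M s‖ :=
          mul_le_mul_of_nonneg_right (norm_mul_le _ _) (norm_nonneg _)
      _ = ‖c‖ := by rw [norm_Uexp ha, norm_Uexp ha, h2, one_mul, mul_one]
  have hg0 : g 0 = 0 := by
    simp only [hgdef, neg_zero, Uexp_zero, one_mul, mul_one, sub_self]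
  have key := norm_image_sub_le_of_norm_deriv_le_segment'
    (f := g) (f' := g') (a := 0) (b := t)
    (fun s _ => (hderiv s).hasDerivWithinAt) (fun s _ => hnorm s) t (Set.right_mem_Icc.2 ht)
  rw [hg0, sub_zero, sub_zero] at key
  have hfactor : Uexp M t * g t = b * Uexp M t - Uexp M t * b := by
    rw [hgdef]
    simp only
    rw [mul_sub, ← mul_assoc, ← mul_assoc, Uexp_mul_neg, one_mul]
  calc ‖b * Uexp M t - Uexp M t * b‖ = ‖Uexp M t * g t‖ := by rw [hfactor]
    _ ≤ ‖Uexp M t‖ * ‖g t‖ := norm_mul_le _ _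
    _ = ‖g t‖ := by rw [norm_Uexp ha, one_mul]
    _ ≤ ‖c‖ * t := key
    _ = t * ‖c‖ := mul_comm _ _

lemma alg_aux (P Q R Ma Mb : E) (hca : P * Ma = Ma * P) (hcb : R * Mb = Mb * R) :
    -(Q * (Ma + Mb)) * (P * R) + Q * (P * Ma * R + P * (R * Mb)) =
      Q * ((P * Mb - Mb * P) * R) := by
  rw [hca, hcb]
  noncomm_ring

lemma trotter_abstract [Nontrivial E] (a b : E) (ha : IsSelfAdjoint a) (hb : IsSelfAdjoint b)
    (x : ℝ) (hx : 0 ≤ x) :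
    ‖Uexp ((-I) • (a + b)) x - Uexp ((-I) • a) x * Uexp ((-I) • b) x‖ ≤
      x ^ 2 / 2 * ‖a * b - b * a‖ := by
  set Ma : E := (-I) • a with hMa
  set Mb : E := (-I) • b with hMb
  have hMh : (-I : ℂ) • (a + b) = Ma + Mb := by rw [hMa, hMb, smul_add]
  rw [hMh]
  set Mh : E := Ma + Mb with hMhdef
  set c : E := a * b - b * a with hc
  set f : ℝ → E := fun t => Uexp Mh (x - t) * (Uexp Ma t * Uexp Mb t) with hfdef
  set f' : ℝ → E :=
    fun t => Uexp Mh (x - t) * ((Uexp Ma t * Mb - Mb * Uexp Ma t) * Uexp Mb t) with hf'def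
  have hderiv : ∀ t : ℝ, HasDerivAt f (f' t) t := by
    intro t
    have h0 : HasDerivAt (fun t : ℝ => Uexp Mh (x - t)) ((-1 : ℝ) • (Uexp Mh (x - t) * Mh)) t :=
      HasDerivAt.scomp t (hasDerivAt_Uexp Mh (x - t)) ((hasDerivAt_id t).const_sub x)
    have h1 := (hasDerivAt_Uexp Ma t).mul (hasDerivAt_Uexp Mb t)
    have h3 := h0.mul h1
    refine h3.congr_deriv (Eq.symm ?_)
    simp only [neg_one_smul]
    rw [hf'def]
    simp only
    rw [← alg_aux (Uexp Ma t) (Uexp Mh (x - t)) (Uexp Mb t) Ma Mb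
      (Uexp_commute Ma t) (Uexp_commute Mb t)]
    rfl
  have hbound : ∀ t ∈ Set.Ico (0 : ℝ) x, ‖f' t‖ ≤ ‖c‖ * t := by
    intro t ht
    have hinner : ‖Uexp Ma t * Mb - Mb * Uexp Ma t‖ ≤ t * ‖c‖ := by
      have h1 : Uexp Ma t * Mb - Mb * Uexp Ma t = (-I) • (Uexp Ma t * b - b * Uexp Ma t) := by
        rw [hMb, smul_sub, mul_smul_comm, smul_mul_assoc]
      rw [h1, norm_smul]
      simp only [norm_neg, Complex.norm_I, one_mul]
      rw [show Uexp Ma t * b - b * Uexp Ma t = -(b * Uexp Ma t - Uexp Ma t * b) from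
        (neg_sub _ _).symm, norm_neg]
      exact comm_Uexp_bound ha b t ht.1
    calc ‖f' t‖ ≤ ‖Uexp Mh (x - t)‖ * ‖(Uexp Ma t * Mb - Mb * Uexp Ma t) * Uexp Mb t‖ :=
          norm_mul_le _ _
      _ ≤ ‖Uexp Mh (x - t)‖ * (‖Uexp Ma t * Mb - Mb * Uexp Ma t‖ * ‖Uexp Mb t‖) :=
          mul_le_mul_of_nonneg_left (norm_mul_le _ _) (norm_nonneg _)
      _ = ‖Uexp Ma t * Mb - Mb * Uexp Ma t‖ := by
          rw [hMhdef, hMa, hMb, ← smul_add]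
          rw [norm_Uexp (ha.add hb), norm_Uexp hb]
          ring
      _ ≤ t * ‖c‖ := hinner
      _ = ‖c‖ * t := mul_comm _ _
  set F : ℝ → E := fun t => f t - f 0 with hFdef
  set B : ℝ → ℝ := fun t => ‖c‖ / 2 * t ^ 2 with hBdef
  have hB : ∀ t : ℝ, HasDerivAt B (‖c‖ * t) t := by
    intro t
    have := (hasDerivAt_pow 2 t).const_mul (‖c‖ / 2)
    refine this.congr_deriv (Eq.symm ?_)
    push_cast
    ring
  have key : ∀ y ∈ Set.Icc (0 : ℝ) x, ‖F y‖ ≤ B y := by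
    refine image_norm_le_of_norm_deriv_right_le_deriv_boundary (f' := f')
      (fun t _ => (((hderiv t).sub_const (f 0)).continuousAt).continuousWithinAt)
      (fun t _ => ((hderiv t).sub_const (f 0)).hasDerivWithinAt) ?_ hB hbound
    simp [hFdef, hBdef]
  have keyx := key x (Set.right_mem_Icc.2 hx)
  have hFx : F x = Uexp Ma x * Uexp Mb x - Uexp Mh x := by
    rw [hFdef, hfdef]
    simp only [sub_self, sub_zero, Uexp_zero, one_mul, mul_one]
  rw [hFx, norm_sub_rev] at keyx
  calc ‖Uexp Mh x - Uexp Ma x * Uexp Mb x‖ ≤ B x := keyx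
    _ = x ^ 2 / 2 * ‖c‖ := by rw [hBdef]; ring

end TrotterAux

set_option maxHeartbeats 1000000 in
/-- First-order Trotter error bound with mcomm scaling:
‖e^{-i(H₁+H₂)x} - e^{-iH₁x}e^{-iH₂x}‖∞ ≤ (x²/2)‖[H₁,H₂]‖∞. -/
theorem stmt17 {n : Type*} [Fintype n] [DecidableEq n]
    (H₁ H₂ : Matrix n n ℂ) (h₁ : H₁.IsHermitian) (h₂ : H₂.IsHermitian) (x : ℝ) (hx : 0 ≤ x) :
    opNorm (NormedSpace.exp (((-Complex.I) * x) • (H₁ + H₂)) -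
        NormedSpace.exp (((-Complex.I) * x) • H₁) *
          NormedSpace.exp (((-Complex.I) * x) • H₂)) ≤
      x ^ 2 / 2 * opNorm (mcomm H₁ H₂) := by
  classical
  cases isEmpty_or_nonempty n with
  | inl hempty =>
    haveI : Subsingleton (EuclideanSpace ℂ n) := inferInstance
    haveI : Subsingleton (EuclideanSpace ℂ n →L[ℂ] EuclideanSpace ℂ n) :=
      ⟨fun f g => ContinuousLinearMap.ext fun v => Subsingleton.elim _ _⟩
    have h0 : ∀ A : Matrix n n ℂ, opNorm A = 0 := by
      intro A
      rw [opNorm, Subsingleton.elim (Matrix.toEuclideanCLM (𝕜 := ℂ) A) 0, norm_zero]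
    rw [h0, h0, mul_zero]
  | inr hne =>
    set A := Matrix.toEuclideanCLM (𝕜 := ℂ) (n := n) with hA
    haveI : Nontrivial (EuclideanSpace ℂ n) := inferInstance
    haveI : Nontrivial (EuclideanSpace ℂ n →L[ℂ] EuclideanSpace ℂ n) := by
      refine ⟨1, 0, fun h => ?_⟩
      obtain ⟨v, hv⟩ := exists_ne (0 : EuclideanSpace ℂ n)
      exact hv (by simpa using DFunLike.congr_fun h v)
    let L : Matrix n n ℂ ≃ₗ[ℂ] (EuclideanSpace ℂ n →L[ℂ] EuclideanSpace ℂ n) :=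
      { toFun := A, invFun := A.symm,
        map_add' := map_add A, map_smul' := map_smul A,
        left_inv := A.symm_apply_apply, right_inv := A.apply_symm_apply }
    let CLE := L.toContinuousLinearEquiv
    have hCLE : ∀ M : Matrix n n ℂ, CLE M = A M := fun _ => rfl
    have hexp0 : ∀ M : Matrix n n ℂ,
        A (NormedSpace.exp M) = NormedSpace.exp (A M) := by
      intro M
      simp only [NormedSpace.exp_eq_tsum ℂ]
      have htsum := CLE.map_tsum (L := SummationFilter.unconditional ℕ) (f := fun k : ℕ => ((k.factorial : ℂ)⁻¹) • M ^ k)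
      rw [show A (∑' k : ℕ, ((k.factorial : ℂ)⁻¹) • M ^ k) =
        CLE (∑' k : ℕ, ((k.factorial : ℂ)⁻¹) • M ^ k) from rfl, htsum]
      refine tsum_congr fun k => ?_
      rw [hCLE, _root_.map_smul, _root_.map_pow]
    have hexp : ∀ (M : Matrix n n ℂ),
        A (NormedSpace.exp (((-Complex.I) * x) • M)) = Uexp ((-I) • A M) x := by
      intro M
      rw [hexp0, _root_.map_smul]
      unfold Uexp
      congr 1
      rw [smul_smul, mul_comm]
    have hsa₁ : IsSelfAdjoint (A H₁) := by
      have h' : star (A H₁) = A H₁ := by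
        rw [← map_star A H₁, Matrix.star_eq_conjTranspose]
        exact congrArg A h₁
      exact h'
    have hsa₂ : IsSelfAdjoint (A H₂) := by
      have h' : star (A H₂) = A H₂ := by
        rw [← map_star A H₂, Matrix.star_eq_conjTranspose]
        exact congrArg A h₂
      exact h'
    have hmain := trotter_abstract (A H₁) (A H₂) hsa₁ hsa₂ x hx
    have e1 : opNorm (NormedSpace.exp (((-Complex.I) * x) • (H₁ + H₂)) -
        NormedSpace.exp (((-Complex.I) * x) • H₁) *
          NormedSpace.exp (((-Complex.I) * x) • H₂)) =
        ‖Uexp ((-I) • (A H₁ + A H₂)) x - Uexp ((-I) • A H₁) x * Uexp ((-I) • A H₂) x‖ := by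
      unfold opNorm
      rw [← hA, _root_.map_sub, _root_.map_mul, hexp, hexp, hexp, _root_.map_add]
    have e2 : opNorm (mcomm H₁ H₂) = ‖A H₁ * A H₂ - A H₂ * A H₁‖ := by
      unfold opNorm mcomm
      rw [← hA, _root_.map_sub, _root_.map_mul, _root_.map_mul]
    rw [e1, e2]
    exact hmain
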